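/- Let X be a finite set, ℓ ≥ 1, and P an ℓ-th order Markov transition matrix on X whose Doob lift P^{(ℓ)} (a stochastic matrix on X^ℓ) has a single recurrent class; let π be an invariant distribution of P^{(ℓ)} on X^ℓ. For m ≥ ℓ define the joint distribution q_m on X^m by q_m(x_1,…,x_m) = π(x_1,…,x_ℓ) ∏_{j=ℓ+1}^{m} P((x_{j-ℓ},…,x_{j-1}), x_j). Let Y be a finite set with |Y| > 1 and g : X → Y any map. Fix k ≥ 1, set m = max(k+1, ℓ), and let r_{k+1} on Y^{k+1} be the pushforward under coordinatewise application of g of the first-(k+1)-coordinate marginal of q_m, with k-marginal r_k. Let Q be the k-th order Markov transition matrix on Y with Q(w,z) = r_{k+1}(w,z)/r_k(w) if r_k(w) > 0, and Q(w,z) = 1/|Y| otherwise. Then Q has a unique invariant distribution μ on Y^k. -/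

import Mathlib

open Finset
open scoped Classical

noncomputable section

/-- The first `k` coordinates of a length-`k+1` tuple. -/
def front {Z : Type*} {k : ℕ} (v : Fin (k + 1) → Z) : Fin k → Z :=
  fun i => v i.castSucc

/-- The last `k` coordinates of a length-`k+1` tuple. -/
def back {Z : Type*} {k : ℕ} (v : Fin (k + 1) → Z) : Fin k → Z :=
  fun i => v i.succ

/-- `p` is a probability distribution on the finite type `α`. -/
def IsProbDist {α : Type*} [Fintype α] (p : α → ℝ) : Prop :=
  (∀ a, 0 ≤ p a) ∧ ∑ a, p a = 1

/-- `Q` is a `k`-th order Markov transition matrix on `Z`. -/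
def IsTransMat {Z : Type*} [Fintype Z] {k : ℕ} (Q : (Fin k → Z) → Z → ℝ) : Prop :=
  (∀ w z, 0 ≤ Q w z) ∧ ∀ w, ∑ z, Q w z = 1

/-- `μ` is an invariant (probability) distribution for the `k`-th order transition matrix `Q`:
`μ(z₁,…,z_k) = ∑_{z₀} μ(z₀,…,z_{k-1}) Q((z₀,…,z_{k-1}), z_k)`. -/
def IsInvariantFor {Z : Type*} [Fintype Z] {k : ℕ} (μ : (Fin k → Z) → ℝ)
    (Q : (Fin k → Z) → Z → ℝ) : Prop :=
  IsProbDist μ ∧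
    ∀ w : Fin k → Z,
      μ w = ∑ z0 : Z,
        μ (front (Fin.cons z0 w)) *
          Q (front (Fin.cons z0 w)) ((Fin.cons z0 w : Fin (k + 1) → Z) (Fin.last k))

/-- `P` is a (first-order) stochastic matrix. -/
def IsStochastic {S : Type*} [Fintype S] (P : Matrix S S ℝ) : Prop :=
  (∀ i j, 0 ≤ P i j) ∧ ∀ i, ∑ j, P i j = 1

/-- State `j` is accessible from state `i` under the stochastic matrix `P`. -/
def Accessible {S : Type*} [Fintype S] (P : Matrix S S ℝ) (i j : S) : Prop :=
  ∃ n : ℕ, 1 ≤ n ∧ 0 < (P ^ n) i j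

/-- State `i` is recurrent for the stochastic matrix `P`. -/
def Recurrent {S : Type*} [Fintype S] (P : Matrix S S ℝ) (i : S) : Prop :=
  ∀ j, Accessible P i j → Accessible P j i

/-- `P` has a single recurrent class. -/
def SingleRecurrentClass {S : Type*} [Fintype S] (P : Matrix S S ℝ) : Prop :=
  (∃ i, Recurrent P i) ∧ ∀ i j, Recurrent P i → Recurrent P j → Accessible P i j

/-- The Doob lift of a `k`-th order transition matrix `Q` on `Z` to a first-order
stochastic matrix on `Z^k`. -/
def doobLift {Z : Type*} {k : ℕ} (Q : (Fin k → Z) → Z → ℝ) (hk : 0 < k) :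
    Matrix (Fin k → Z) (Fin k → Z) ℝ :=
  Matrix.of fun w w' =>
    if ∀ (i : Fin k) (h : (i : ℕ) + 1 < k), w' i = w ⟨(i : ℕ) + 1, h⟩ then
      Q w (w' ⟨k - 1, Nat.sub_lt hk Nat.one_pos⟩)
    else 0

/-- The distribution of a length-`m` block of the process `g(X)`, where `X` is a
stationary Markov chain with transition matrix `P` and (initial) invariant
distribution `π`:
`p_m(y₁,…,y_m) = ∑_{x₁ ∈ g⁻¹(y₁),…,x_m ∈ g⁻¹(y_m)} π(x₁) ∏_{ℓ=2}^m P(x_{ℓ-1}, x_ℓ)`. -/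
def wordDist {X Y : Type*} [Fintype X] (P : Matrix X X ℝ) (π : X → ℝ) (g : X → Y)
    {m : ℕ} (y : Fin m → Y) : ℝ :=
  ∑ x : Fin m → X,
    if ∀ i, g (x i) = y i then
      ∏ i : Fin m,
        if (i : ℕ) = 0 then π (x i)
        else P (x ⟨(i : ℕ) - 1, lt_of_le_of_lt (Nat.sub_le _ _) i.isLt⟩) (x i)
    else 0

section General
variable {S : Type*} [Fintype S] {P : Matrix S S ℝ}

lemma pow_entry_nonneg (hP : ∀ i j, 0 ≤ P i j) (n : ℕ) (hn : 1 ≤ n) :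
    ∀ i j, 0 ≤ (P ^ n) i j := by
  induction n with
  | zero => omega
  | succ n ih =>
    intro i j
    rcases Nat.eq_or_lt_of_le (Nat.one_le_iff_ne_zero.mpr (Nat.succ_ne_zero n)) with h | h
    · simp [pow_succ]
      rcases Nat.eq_zero_or_pos n with hn0 | hn0
      · subst hn0; simpa using hP i j
      · exact Finset.sum_nonneg fun l _ => mul_nonneg (ih hn0 i l) (hP l j)
    · rcases Nat.eq_zero_or_pos n with hn0 | hn0
      · subst hn0; simpa using hP i j
      · simp only [pow_succ, Matrix.mul_apply]
        exact Finset.sum_nonneg fun l _ => mul_nonneg (ih hn0 i l) (hP l j)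

lemma pow_rowsum (hP : IsStochastic P) (n : ℕ) : ∀ i, ∑ j, (P ^ n) i j = 1 := by
  induction n with
  | zero => intro i; simp [Matrix.one_apply, Finset.sum_ite_eq']
  | succ n ih =>
    intro i
    simp only [pow_succ, Matrix.mul_apply]
    rw [Finset.sum_comm]
    calc ∑ l, ∑ j, (P ^ n) i l * P l j = ∑ l, (P ^ n) i l * ∑ j, P l j := by
          simp [Finset.mul_sum]
      _ = 1 := by simp only [hP.2]; simpa using ih i

lemma accessible_trans (hP : ∀ i j, 0 ≤ P i j) {i j l : S}
    (h1 : Accessible P i j) (h2 : Accessible P j l) : Accessible P i l := by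
  obtain ⟨n, hn, hpos⟩ := h1
  obtain ⟨m, hm, hpos'⟩ := h2
  refine ⟨n + m, by omega, ?_⟩
  rw [pow_add, Matrix.mul_apply]
  have : 0 < (P ^ n) i j * (P ^ m) j l := mul_pos hpos hpos'
  calc (0:ℝ) < (P ^ n) i j * (P ^ m) j l := this
    _ ≤ ∑ x, (P ^ n) i x * (P ^ m) x l := by
        refine Finset.single_le_sum (f := fun x => (P ^ n) i x * (P ^ m) x l) ?_ (Finset.mem_univ j)
        intro x _
        exact mul_nonneg (pow_entry_nonneg hP n hn i x) (pow_entry_nonneg hP m hm x l)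

lemma exists_successor (hP : IsStochastic P) (i : S) : ∃ j, 0 < P i j := by
  by_contra h
  push_neg at h
  have : ∑ j, P i j ≤ 0 := Finset.sum_nonpos fun j _ => h j
  rw [hP.2 i] at this; linarith

lemma exists_accessible_recurrent (hP : IsStochastic P) (i : S) :
    ∃ j, Accessible P i j ∧ Recurrent P j := by
  classical
  -- consider reach sets
  set F : S → Finset S := fun l => Finset.univ.filter (fun x => Accessible P l x) with hF
  have hsub : ∀ {a b : S}, Accessible P a b → F b ⊆ F a := by
    intro a b hab
    intro x hx
    simp only [hF, Finset.mem_filter, Finset.mem_univ, true_and] at hx ⊢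
    exact accessible_trans hP.1 hab hx
  have hmem : ∀ {a b : S}, Accessible P a b → b ∈ F a := by
    intro a b hab; simp [hF, hab]
  -- the nonempty image of card ∘ F over reachable states
  obtain ⟨s0, hs0⟩ := exists_successor hP i
  have hacc0 : Accessible P i s0 := ⟨1, le_refl _, by simpa using hs0⟩
  -- choose j reachable from i minimizing (F j).card
  have hne : (Finset.univ.filter (fun l => Accessible P i l)).Nonempty := ⟨s0, by simp [hacc0]⟩
  obtain ⟨j, hj, hjmin⟩ := Finset.exists_min_image _ (fun l => (F l).card) hne
  simp only [Finset.mem_filter, Finset.mem_univ, true_and] at hj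
  have hmin : ∀ l, Accessible P i l → (F j).card ≤ (F l).card := by
    intro l hl; exact hjmin l (by simp [hl])
  have hFeq : ∀ l, Accessible P j l → F l = F j := by
    intro l hl
    have h1 : F l ⊆ F j := hsub hl
    have h2 : Accessible P i l := accessible_trans hP.1 hj hl
    exact Finset.eq_of_subset_of_card_le h1 (hmin l h2)
  -- pick successor j1 of j
  obtain ⟨j1, hj1⟩ := exists_successor hP j
  have haccj1 : Accessible P j j1 := ⟨1, le_refl _, by simpa using hj1⟩
  have hFj1 : F j1 = F j := hFeq j1 haccj1
  have hj1mem : j1 ∈ F j1 := by rw [hFj1]; exact hmem haccj1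
  have hj1self : Accessible P j1 j1 := by
    simpa [hF, Finset.mem_filter] using hj1mem
  refine ⟨j1, accessible_trans hP.1 hj haccj1, ?_⟩
  intro l hl
  -- F l = F j1 (since F j1 = F j and reach from j1 ⊆ via j)
  have haccjl : Accessible P j l := accessible_trans hP.1 haccj1 hl
  have hFl : F l = F j := hFeq l haccjl
  have : j1 ∈ F l := by rw [hFl, ← hFj1]; exact hj1mem
  simpa [hF, Finset.mem_filter] using this

lemma recurrent_of_accessible (hr : Recurrent P i) (h : Accessible P i j)
    (hP : ∀ a b, 0 ≤ P a b) : Recurrent P j := by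
  intro l hl
  have hil : Accessible P i l := accessible_trans hP h hl
  have hli : Accessible P l i := hr l hil
  exact accessible_trans hP hli h

lemma invariant_pow {μ : S → ℝ} (hinv : ∀ j, ∑ i, μ i * P i j = μ j) (n : ℕ) :
    ∀ j, ∑ i, μ i * (P ^ n) i j = μ j := by
  induction n with
  | zero => intro j; simp [Matrix.one_apply]
  | succ n ih =>
    intro j
    simp only [pow_succ, Matrix.mul_apply, Finset.mul_sum]
    rw [Finset.sum_comm]
    calc ∑ l, ∑ i, μ i * ((P ^ n) i l * P l j)
        = ∑ l, (∑ i, μ i * (P ^ n) i l) * P l j := by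
          congr 1; ext l; rw [Finset.sum_mul]; congr 1; ext i; ring
      _ = ∑ l, μ l * P l j := by simp only [ih]
      _ = μ j := hinv j

lemma invariant_pos_accessible {μ : S → ℝ} (hP : ∀ a b, 0 ≤ P a b)
    (hμ : ∀ a, 0 ≤ μ a) (hinv : ∀ j, ∑ i, μ i * P i j = μ j)
    {i j : S} (hi : 0 < μ i) (hij : Accessible P i j) : 0 < μ j := by
  obtain ⟨n, hn, hpos⟩ := hij
  have := invariant_pow hinv n j
  have hle : μ i * (P ^ n) i j ≤ ∑ l, μ l * (P ^ n) l j :=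
    Finset.single_le_sum (f := fun l => μ l * (P ^ n) l j)
      (fun l _ => mul_nonneg (hμ l) (pow_entry_nonneg hP n hn l j)) (Finset.mem_univ i)
  rw [this] at hle
  exact lt_of_lt_of_le (mul_pos hi hpos) hle

/-- mass of recurrent class under invariant distribution: support ⊆ recurrent -/
lemma invariant_supp_recurrent (hP : IsStochastic P)
    {μ : S → ℝ} (hμ0 : ∀ a, 0 ≤ μ a) (hinv : ∀ j, ∑ i, μ i * P i j = μ j)
    {t : S} (ht : 0 < μ t) : Recurrent P t := by
  classical
  by_contra htr
  set R : Finset S := Finset.univ.filter (fun x => Recurrent P x) with hR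
  obtain ⟨s, hts, hsrec⟩ := exists_accessible_recurrent hP t
  obtain ⟨n, hn, hpn⟩ := hts
  -- key: for i ∈ R, (P^n) i j = 0 for j ∉ R, hence ∑_{j∈R} (P^n) i j = 1
  have hclosed : ∀ i ∈ R, ∀ j, j ∉ R → (P ^ n) i j = 0 := by
    intro i hi j hj
    by_contra hne
    have hpos : 0 < (P ^ n) i j :=
      lt_of_le_of_ne (pow_entry_nonneg hP.1 n hn i j) (Ne.symm hne)
    have : Recurrent P j := by
      refine recurrent_of_accessible ?_ ⟨n, hn, hpos⟩ hP.1
      simpa [hR, Finset.mem_filter] using hi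
    exact hj (by simp [hR, this])
  have hrowR : ∀ i ∈ R, ∑ j ∈ R, (P ^ n) i j = 1 := by
    intro i hi
    have := pow_rowsum hP n i
    rw [← this]
    rw [← Finset.sum_subset (Finset.subset_univ R)]
    intro x _ hx
    exact hclosed i hi x hx
  -- mass identity
  have hmass : ∑ j ∈ R, μ j = ∑ i, μ i * (∑ j ∈ R, (P ^ n) i j) := by
    calc ∑ j ∈ R, μ j = ∑ j ∈ R, ∑ i, μ i * (P ^ n) i j := by
          refine Finset.sum_congr rfl ?_
          intro j _
          rw [invariant_pow hinv n j]
      _ = ∑ i, ∑ j ∈ R, μ i * (P ^ n) i j := Finset.sum_comm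
      _ = ∑ i, μ i * (∑ j ∈ R, (P ^ n) i j) := by
          refine Finset.sum_congr rfl ?_
          intro i _
          rw [Finset.mul_sum]
  -- lower bound: split off R-part and the t-term
  have htR : t ∉ R := by simp [hR, htr]
  have hsR : s ∈ R := by simp [hR, hsrec]
  have hsplit : ∑ i, μ i * (∑ j ∈ R, (P ^ n) i j)
      ≥ (∑ i ∈ R, μ i * (∑ j ∈ R, (P ^ n) i j)) + μ t * (∑ j ∈ R, (P ^ n) t j) := by
    have h1 : insert t R ⊆ Finset.univ := Finset.subset_univ _
    have h2 : ∑ i ∈ insert t R, μ i * (∑ j ∈ R, (P ^ n) i j)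
        = μ t * (∑ j ∈ R, (P ^ n) t j) + ∑ i ∈ R, μ i * (∑ j ∈ R, (P ^ n) i j) :=
      Finset.sum_insert htR
    have h3 : ∑ i ∈ insert t R, μ i * (∑ j ∈ R, (P ^ n) i j)
        ≤ ∑ i, μ i * (∑ j ∈ R, (P ^ n) i j) := by
      refine Finset.sum_le_sum_of_subset_of_nonneg h1 ?_
      intro i _ _
      exact mul_nonneg (hμ0 i) (Finset.sum_nonneg fun j _ => pow_entry_nonneg hP.1 n hn i j)
    rw [h2] at h3
    linarith
  have hRpart : ∑ i ∈ R, μ i * (∑ j ∈ R, (P ^ n) i j) = ∑ j ∈ R, μ j := by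
    refine Finset.sum_congr rfl ?_
    intro i hi
    rw [hrowR i hi, mul_one]
  have htpos : 0 < μ t * (∑ j ∈ R, (P ^ n) t j) := by
    refine mul_pos ht ?_
    calc (0:ℝ) < (P ^ n) t s := hpn
      _ ≤ ∑ j ∈ R, (P ^ n) t j :=
        Finset.single_le_sum (f := fun j => (P ^ n) t j)
          (fun j _ => pow_entry_nonneg hP.1 n hn t j) hsR
  rw [hRpart] at hsplit
  rw [hmass] at *
  linarith


lemma exists_pos_of_sum_one {μ : S → ℝ} (h : ∑ a, μ a = 1) : ∃ a, 0 < μ a := by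
  by_contra hc
  push_neg at hc
  have : ∑ a, μ a ≤ 0 := Finset.sum_nonpos fun a _ => hc a
  linarith

lemma invariant_unique (hP : IsStochastic P) (hsrc : SingleRecurrentClass P)
    {μ ν : S → ℝ} (hμ0 : ∀ a, 0 ≤ μ a) (hμ1 : ∑ a, μ a = 1)
    (hμinv : ∀ j, ∑ i, μ i * P i j = μ j)
    (hν0 : ∀ a, 0 ≤ ν a) (hν1 : ∑ a, ν a = 1)
    (hνinv : ∀ j, ∑ i, ν i * P i j = ν j) : μ = ν := by
  classical
  set R : Finset S := Finset.univ.filter (fun x => Recurrent P x) with hR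
  have hRmem : ∀ x, x ∈ R ↔ Recurrent P x := by intro x; simp [hR]
  -- zero off R
  have hμz : ∀ x, x ∉ R → μ x = 0 := by
    intro x hx
    by_contra hne
    have : 0 < μ x := lt_of_le_of_ne (hμ0 x) (Ne.symm hne)
    exact hx ((hRmem x).mpr (invariant_supp_recurrent hP hμ0 hμinv this))
  have hνz : ∀ x, x ∉ R → ν x = 0 := by
    intro x hx
    by_contra hne
    have : 0 < ν x := lt_of_le_of_ne (hν0 x) (Ne.symm hne)
    exact hx ((hRmem x).mpr (invariant_supp_recurrent hP hν0 hνinv this))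
  -- positivity on R
  have hμpos : ∀ x ∈ R, 0 < μ x := by
    obtain ⟨a, ha⟩ := exists_pos_of_sum_one hμ1
    have harec : Recurrent P a := invariant_supp_recurrent hP hμ0 hμinv ha
    intro x hx
    exact invariant_pos_accessible hP.1 hμ0 hμinv ha
      (hsrc.2 a x harec ((hRmem x).mp hx))
  have hνpos : ∀ x ∈ R, 0 < ν x := by
    obtain ⟨a, ha⟩ := exists_pos_of_sum_one hν1
    have harec : Recurrent P a := invariant_supp_recurrent hP hν0 hνinv ha
    intro x hx
    exact invariant_pos_accessible hP.1 hν0 hνinv ha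
      (hsrc.2 a x harec ((hRmem x).mp hx))
  -- minimize μ/ν over R
  have hRne : R.Nonempty := by
    obtain ⟨a, ha⟩ := hsrc.1
    exact ⟨a, (hRmem a).mpr ha⟩
  obtain ⟨r0, hr0R, hr0min⟩ := Finset.exists_min_image R (fun x => μ x / ν x) hRne
  set c : ℝ := μ r0 / ν r0 with hc
  set h : S → ℝ := fun x => μ x - c * ν x with hh
  have hinvh : ∀ j, ∑ i, h i * P i j = h j := by
    intro j
    simp only [hh, sub_mul]
    rw [Finset.sum_sub_distrib]
    rw [hμinv j]
    congr 1
    calc ∑ x, c * ν x * P x j = c * ∑ x, ν x * P x j := by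
          rw [Finset.mul_sum]; congr 1; ext x; ring
      _ = c * ν j := by rw [hνinv j]
  -- h vanishes at r0
  have hνr0 : 0 < ν r0 := hνpos r0 hr0R
  have hhr0 : h r0 = 0 := by
    simp only [hh, hc]
    field_simp
    ring
  -- h ≥ 0 everywhere
  have hh0 : ∀ x, 0 ≤ h x := by
    intro x
    by_cases hx : x ∈ R
    · have hνx : 0 < ν x := hνpos x hx
      have := hr0min x hx
      simp only [hh]
      rw [div_le_div_iff₀ hνr0 hνx] at this
      have : c * ν x ≤ μ x := by
        rw [hc, div_mul_eq_mul_div, div_le_iff₀ hνr0]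
        linarith
      linarith
    · simp only [hh, hμz x hx, hνz x hx]
      simp
  -- h is identically zero: otherwise positive somewhere propagates to r0
  have hhz : ∀ x, h x = 0 := by
    intro x
    by_contra hne
    have hxpos : 0 < h x := lt_of_le_of_ne (hh0 x) (Ne.symm hne)
    have hxR : x ∈ R := by
      by_contra hxR
      simp [hh, hμz x hxR, hνz x hxR] at hne
    have hacc : Accessible P x r0 :=
      hsrc.2 x r0 ((hRmem x).mp hxR) ((hRmem r0).mp hr0R)
    have := invariant_pos_accessible hP.1 hh0 hinvh hxpos hacc
    rw [hhr0] at this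
    exact lt_irrefl 0 this
  -- conclude c = 1 and μ = ν
  have hμcv : ∀ x, μ x = c * ν x := by
    intro x
    have := hhz x
    simp only [hh] at this
    linarith
  have hsum : (1:ℝ) = c := by
    calc (1:ℝ) = ∑ a, μ a := hμ1.symm
      _ = ∑ a, c * ν a := by refine Finset.sum_congr rfl fun a _ => hμcv a
      _ = c * ∑ a, ν a := by rw [Finset.mul_sum]
      _ = c := by rw [hν1, mul_one]
  funext x
  rw [hμcv x, ← hsum, one_mul]

/-- chain decoding from positive matrix power -/
lemma chain_of_pow_pos (hP : ∀ i j, 0 ≤ P i j) :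
    ∀ (n : ℕ) (i j : S), 0 < (P ^ n) i j →
      ∃ c : ℕ → S, c 0 = i ∧ c n = j ∧ ∀ t < n, 0 < P (c t) (c (t + 1)) := by
  intro n
  induction n with
  | zero =>
    intro i j hpos
    have : i = j := by
      by_contra hne
      simp [Matrix.one_apply, hne] at hpos
    exact ⟨fun _ => i, rfl, this ▸ rfl, by omega⟩
  | succ n ih =>
    intro i j hpos
    rw [pow_succ, Matrix.mul_apply] at hpos
    have : ∃ l, 0 < (P ^ n) i l * P l j := by
      by_contra hcon
      push_neg at hcon
      have : ∑ l, (P ^ n) i l * P l j ≤ 0 := Finset.sum_nonpos fun l _ => hcon l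
      linarith
    obtain ⟨l, hl⟩ := this
    have h1 : 0 < (P ^ n) i l := by
      rcases lt_or_ge 0 ((P ^ n) i l) with h | h
      · exact h
      · nlinarith [hP l j]
    have h2 : 0 < P l j := by
      rcases lt_or_ge 0 (P l j) with h | h
      · exact h
      · nlinarith
    obtain ⟨c, hc0, hcn, hcstep⟩ := ih i l h1
    refine ⟨fun t => if t ≤ n then c t else j, by simpa using hc0, by simp, ?_⟩
    intro t ht
    rcases Nat.lt_or_ge t n with h | h
    · have ht1 : t + 1 ≤ n := h
      simpa [Nat.le_of_lt h, ht1] using hcstep t h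
    · have htn : t = n := by omega
      subst htn
      simpa [hcn] using h2

/-- positive matrix power from a chain -/
lemma pow_pos_of_chain (hP : ∀ i j, 0 ≤ P i j) (c : ℕ → S) :
    ∀ n : ℕ, (∀ t < n, 0 < P (c t) (c (t + 1))) → 0 < (P ^ n) (c 0) (c n) := by
  intro n
  induction n with
  | zero => intro _; simp [Matrix.one_apply]
  | succ n ih =>
    intro hstep
    have h1 : 0 < (P ^ n) (c 0) (c n) := ih fun t ht => hstep t (by omega)
    have h2 : 0 < P (c n) (c (n + 1)) := hstep n (by omega)
    rw [pow_succ, Matrix.mul_apply]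
    calc (0:ℝ) < (P ^ n) (c 0) (c n) * P (c n) (c (n + 1)) := mul_pos h1 h2
      _ ≤ ∑ l, (P ^ n) (c 0) l * P l (c (n + 1)) := by
        refine Finset.single_le_sum (f := fun l => (P ^ n) (c 0) l * P l (c (n+1))) ?_
          (Finset.mem_univ (c n))
        intro l _
        rcases Nat.eq_zero_or_pos n with h0 | h0
        · subst h0
          simp only [pow_zero, Matrix.one_apply]
          split
          · simpa using hP l (c 1)
          · simp
        · exact mul_nonneg (pow_entry_nonneg hP n h0 (c 0) l) (hP l (c (n+1)))

end General

section Doob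
variable {Z : Type*} [Fintype Z] {κ : ℕ}

lemma sum_cons_reindex {n : ℕ} (f : (Fin (n + 1) → Z) → ℝ) :
    ∑ v, f v = ∑ z, ∑ t : Fin n → Z, f (Fin.cons z t) := by
  rw [← Equiv.sum_comp (Fin.consEquiv (fun _ => Z)) f, Fintype.sum_prod_type]
  rfl

lemma sum_snoc_reindex {n : ℕ} (f : (Fin (n + 1) → Z) → ℝ) :
    ∑ v, f v = ∑ t : Fin n → Z, ∑ z, f (Fin.snoc t z) := by
  rw [← Equiv.sum_comp (Fin.snocEquiv (fun _ => Z)) f, Fintype.sum_prod_type]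
  rw [Finset.sum_comm]
  rfl

def shiftSnoc (w : Fin (κ + 1) → Z) (z : Z) : Fin (κ + 1) → Z :=
  fun i => if h : (i : ℕ) + 1 < κ + 1 then w ⟨(i : ℕ) + 1, h⟩ else z

lemma doobLift_apply (Q : (Fin (κ+1) → Z) → Z → ℝ) (hk : 0 < κ + 1) (w w' : Fin (κ+1) → Z) :
    doobLift Q hk w w' =
      if ∀ (i : Fin (κ+1)) (h : (i : ℕ) + 1 < κ + 1), w' i = w ⟨(i : ℕ) + 1, h⟩ then
        Q w (w' ⟨κ, Nat.lt_succ_self κ⟩)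
      else 0 := rfl

lemma shiftSnoc_last (w : Fin (κ + 1) → Z) (z : Z) :
    shiftSnoc w z ⟨κ, Nat.lt_succ_self κ⟩ = z := by
  simp [shiftSnoc]

lemma doobLift_shiftSnoc (Q : (Fin (κ+1) → Z) → Z → ℝ) (hk : 0 < κ + 1)
    (w : Fin (κ+1) → Z) (z : Z) : doobLift Q hk w (shiftSnoc w z) = Q w z := by
  rw [doobLift_apply]
  rw [if_pos]
  · rw [shiftSnoc_last]
  · intro i h
    simp [shiftSnoc, h]

lemma doobLift_win_step (Q : (Fin (κ+1) → Z) → Z → ℝ) (hk : 0 < κ + 1)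
    (x : ℕ → Z) (t : ℕ) :
    doobLift Q hk (fun i : Fin (κ+1) => x (t + i)) (fun i : Fin (κ+1) => x (t + 1 + i)) =
      Q (fun i : Fin (κ+1) => x (t + i)) (x (t + (κ + 1))) := by
  rw [doobLift_apply, if_pos]
  · congr 1
    simp only
    congr 1
    omega
  · intro i h
    simp only
    congr 1
    omega

lemma doobLift_stochastic (Q : (Fin (κ+1) → Z) → Z → ℝ) (hQ : IsTransMat Q)
    (hk : 0 < κ + 1) : IsStochastic (doobLift Q hk) := by
  constructor
  · intro w w'
    rw [doobLift_apply]
    split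
    · exact hQ.1 _ _
    · exact le_refl 0
  · intro w
    rw [sum_snoc_reindex (fun w' => doobLift Q hk w w')]
    have key : ∀ (t : Fin κ → Z) (z : Z),
        doobLift Q hk w (Fin.snoc t z) = if t = back w then Q w z else 0 := by
      intro t z
      rw [doobLift_apply]
      by_cases ht : t = back w
      · subst ht
        rw [if_pos, if_pos rfl]
        · congr 1
          have h1 : (⟨κ, Nat.lt_succ_self κ⟩ : Fin (κ+1)) = Fin.last κ := rfl
          rw [h1, Fin.snoc_last]
        · intro i h
          have hi : i = Fin.castSucc ⟨(i : ℕ), by omega⟩ := by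
            apply Fin.ext; rfl
          conv_lhs => rw [hi]
          rw [Fin.snoc_castSucc]
          show back w ⟨(i : ℕ), _⟩ = w ⟨(i : ℕ) + 1, h⟩
          unfold back
          congr 1
      · rw [if_neg, if_neg ht]
        intro hcond
        apply ht
        funext j
        have hj := hcond (Fin.castSucc j) (by simp)
        rw [Fin.snoc_castSucc] at hj
        rw [hj]
        unfold back
        congr 1
    simp only [key]
    calc ∑ t : Fin κ → Z, ∑ z, (if t = back w then Q w z else 0)
        = ∑ t : Fin κ → Z, (if t = back w then ∑ z, Q w z else 0) := by
          refine Finset.sum_congr rfl fun t _ => ?_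
          split <;> simp
      _ = ∑ t : Fin κ → Z, (if t = back w then (1:ℝ) else 0) := by
          refine Finset.sum_congr rfl fun t _ => ?_
          rw [hQ.2]
      _ = 1 := by rw [Finset.sum_ite_eq' Finset.univ (back w) (fun _ => (1:ℝ))]; simp


lemma front_cons_zero (z : Z) (w' : Fin (κ + 1) → Z) :
    front (Fin.cons z w') 0 = z := by
  unfold front
  have : Fin.castSucc (0 : Fin (κ + 1)) = 0 := rfl
  rw [this, Fin.cons_zero]

lemma cond_front_cons (z : Z) (w' : Fin (κ + 1) → Z) (i : Fin (κ + 1))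
    (h : (i : ℕ) + 1 < κ + 1) : w' i = front (Fin.cons z w') ⟨(i : ℕ) + 1, h⟩ := by
  unfold front
  have h1 : Fin.castSucc (⟨(i : ℕ) + 1, h⟩ : Fin (κ + 1)) = Fin.succ ⟨(i : ℕ), by omega⟩ := by
    apply Fin.ext; rfl
  rw [h1, Fin.cons_succ]

lemma eq_front_cons_of_cond (w w' : Fin (κ + 1) → Z)
    (hcond : ∀ (i : Fin (κ + 1)) (h : (i : ℕ) + 1 < κ + 1), w' i = w ⟨(i : ℕ) + 1, h⟩) :
    w = front (Fin.cons (w 0) w') := by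
  funext i
  refine Fin.cases ?_ ?_ i
  · rw [front_cons_zero]
  · intro j
    unfold front
    have h1 : Fin.castSucc (Fin.succ j) = Fin.succ (Fin.castSucc j) := rfl
    rw [h1, Fin.cons_succ]
    have h2 : ((Fin.castSucc j : Fin (κ + 1)) : ℕ) + 1 < κ + 1 := by
      have hj := j.isLt
      simp only [Fin.coe_castSucc]
      omega
    have h3 := hcond (Fin.castSucc j) h2
    rw [h3]
    congr 1

lemma doobLift_col (μ : (Fin (κ + 1) → Z) → ℝ) (Q : (Fin (κ + 1) → Z) → Z → ℝ)
    (hk : 0 < κ + 1) (w' : Fin (κ + 1) → Z) :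
    ∑ w, μ w * doobLift Q hk w w' =
      ∑ z, μ (front (Fin.cons z w')) *
        Q (front (Fin.cons z w')) (w' ⟨κ, Nat.lt_succ_self κ⟩) := by
  have step1 : ∀ w, μ w * doobLift Q hk w w' =
      if (∀ (i : Fin (κ + 1)) (h : (i : ℕ) + 1 < κ + 1), w' i = w ⟨(i : ℕ) + 1, h⟩) then
        μ w * Q w (w' ⟨κ, Nat.lt_succ_self κ⟩) else 0 := by
    intro w
    rw [doobLift_apply]
    split <;> simp
  simp only [step1]
  rw [Finset.sum_ite, Finset.sum_const_zero, add_zero]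
  refine Finset.sum_bij' (fun w _ => w 0)
    (fun z _ => front (Fin.cons z w')) ?_ ?_ ?_ ?_ ?_
  · intro w _; exact Finset.mem_univ _
  · intro z _
    simp only [Finset.mem_filter, Finset.mem_univ, true_and]
    exact fun i h => cond_front_cons z w' i h
  · intro w hw
    simp only [Finset.mem_filter, Finset.mem_univ, true_and] at hw
    exact (eq_front_cons_of_cond w w' hw).symm
  · intro z _
    exact front_cons_zero z w'
  · intro w hw
    simp only [Finset.mem_filter, Finset.mem_univ, true_and] at hw
    rw [← eq_front_cons_of_cond w w' hw]

lemma snoc_mid {n : ℕ} (t : Fin n → Z) (z : Z) {j : ℕ} (h : j < n) (h2 : j < n + 1) :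
    (Fin.snoc t z : Fin (n+1) → Z) ⟨j, h2⟩ = t ⟨j, h⟩ := by
  have h1 : (⟨j, h2⟩ : Fin (n+1)) = Fin.castSucc ⟨j, h⟩ := rfl
  rw [h1, Fin.snoc_castSucc]

lemma cons_mid {n : ℕ} (t : Fin n → Z) (z : Z) {j : ℕ} (h : j < n) (h2 : j + 1 < n + 1) :
    (Fin.cons z t : Fin (n+1) → Z) ⟨j + 1, h2⟩ = t ⟨j, h⟩ := by
  have h1 : (⟨j + 1, h2⟩ : Fin (n+1)) = Fin.succ ⟨j, h⟩ := rfl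
  rw [h1, Fin.cons_succ]

lemma snoc_window (σ : ℕ → Z) (t : ℕ) :
    Fin.snoc (fun i : Fin κ => σ (t + i)) (σ (t + κ)) = fun i : Fin (κ + 1) => σ (t + i) := by
  funext i
  refine Fin.lastCases ?_ ?_ i
  · rw [Fin.snoc_last]
    rfl
  · intro j
    rw [Fin.snoc_castSucc]
    rfl

lemma doobLift_pos_cond {Q : (Fin (κ + 1) → Z) → Z → ℝ} {hk : 0 < κ + 1}
    {w w' : Fin (κ + 1) → Z} (h : 0 < doobLift Q hk w w') :
    (∀ (i : Fin (κ + 1)) (hi : (i : ℕ) + 1 < κ + 1), w' i = w ⟨(i : ℕ) + 1, hi⟩) ∧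
      0 < Q w (w' ⟨κ, Nat.lt_succ_self κ⟩) := by
  rw [doobLift_apply] at h
  by_cases hc : ∀ (i : Fin (κ + 1)) (hi : (i : ℕ) + 1 < κ + 1), w' i = w ⟨(i : ℕ) + 1, hi⟩
  · rw [if_pos hc] at h
    exact ⟨hc, h⟩
  · rw [if_neg hc] at h
    exact absurd h (lt_irrefl 0)

/-- decode a positive chain of the Doob lift into a sequence -/
lemma doobLift_chain_decode [Nonempty Z] (Q : (Fin (κ + 1) → Z) → Z → ℝ) (hk : 0 < κ + 1)
    (c : ℕ → (Fin (κ + 1) → Z)) (n : ℕ)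
    (hstep : ∀ t < n, 0 < doobLift Q hk (c t) (c (t + 1))) :
    ∃ x : ℕ → Z, (∀ t ≤ n, c t = fun i : Fin (κ + 1) => x (t + i)) ∧
      (∀ t < n, 0 < Q (fun i : Fin (κ + 1) => x (t + i)) (x (t + (κ + 1)))) := by
  classical
  set x : ℕ → Z := fun s =>
    if h : s < κ + 1 then c 0 ⟨s, h⟩
    else if h2 : s - κ ≤ n then c (s - κ) ⟨κ, Nat.lt_succ_self κ⟩
    else Classical.arbitrary Z with hx
  have hwin : ∀ t ≤ n, c t = fun i : Fin (κ + 1) => x (t + i) := by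
    intro t
    induction t with
    | zero =>
      intro _
      funext i
      have hi : (0 : ℕ) + (i : ℕ) < κ + 1 := by have := i.isLt; omega
      simp only [hx, hi, dif_pos]
      congr 1
      apply Fin.ext
      simp
    | succ t ih =>
      intro ht
      have ihh := ih (by omega)
      obtain ⟨hcond, _⟩ := doobLift_pos_cond (hstep t (by omega))
      funext i
      by_cases hicase : (i : ℕ) < κ
      · have h2 : (i : ℕ) + 1 < κ + 1 := by omega
        have := hcond i h2
        rw [this]
        have h3 : c t ⟨(i : ℕ) + 1, h2⟩ = x (t + ((i : ℕ) + 1)) := by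
          rw [ihh]
        rw [h3]
        congr 1
        omega
      · have hik : (i : ℕ) = κ := by have := i.isLt; omega
        have hge : ¬ (t + 1 + (i : ℕ) < κ + 1) := by omega
        have hsub : t + 1 + (i : ℕ) - κ = t + 1 := by omega
        simp only [hx]
        rw [dif_neg hge, dif_pos (by omega : t + 1 + (i : ℕ) - κ ≤ n)]
        rw [hsub]
        congr 1
        apply Fin.ext
        simp [hik]
  refine ⟨x, hwin, ?_⟩
  intro t ht
  obtain ⟨hcond, hq⟩ := doobLift_pos_cond (hstep t ht)
  have h1 := hwin t (by omega)
  have h2 := hwin (t + 1) (by omega)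
  rw [h1, h2] at hq
  have h3 : t + (κ + 1) = t + 1 + κ := by omega
  rw [h3]
  exact hq

end Doob


section QDist
variable {X : Type*} [Fintype X] [Nonempty X] {L : ℕ}
variable (P : (Fin (L + 1) → X) → X → ℝ) (π : (Fin (L + 1) → X) → ℝ)

/-- the window of length `L+1` of a sequence starting at `t` -/
def win (x : ℕ → X) (t : ℕ) : Fin (L + 1) → X := fun i => x (t + (i : ℕ))

/-- probability of the initial `L+1+n` segment of a sequence -/
def qseq (x : ℕ → X) (n : ℕ) : ℝ :=
  π (win x 0) * ∏ j ∈ Finset.range n, P (win x j) (x ((L + 1) + j))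

/-- extension of a tuple to a sequence -/
def vext {n : ℕ} (v : Fin n → X) : ℕ → X :=
  fun t => if h : t < n then v ⟨t, h⟩ else Classical.arbitrary X

/-- tuple version of `qseq` -/
def qq (n : ℕ) (v : Fin (L + 1 + n) → X) : ℝ := qseq P π (vext v) n

lemma win_congr {x y : ℕ → X} {s t : ℕ} (h : ∀ i : ℕ, i ≤ L → x (s + i) = y (t + i)) :
    (win x s : Fin (L+1) → X) = win y t := by
  funext i
  exact h i (by have := i.isLt; omega)

lemma qseq_congr {x y : ℕ → X} {n : ℕ} (h : ∀ t < L + 1 + n, x t = y t) :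
    qseq P π x n = qseq P π y n := by
  unfold qseq
  congr 1
  · congr 1
    refine win_congr ?_
    intro i hi
    exact h (0 + i) (by omega)
  · refine Finset.prod_congr rfl ?_
    intro j hj
    rw [Finset.mem_range] at hj
    congr 1
    · refine win_congr ?_
      intro i hi
      exact h (j + i) (by omega)
    · exact h ((L+1) + j) (by omega)

lemma qseq_nonneg (hP : ∀ w z, 0 ≤ P w z) (hπ : ∀ w, 0 ≤ π w) (x : ℕ → X) (n : ℕ) :
    0 ≤ qseq P π x n :=
  mul_nonneg (hπ _) (Finset.prod_nonneg fun j _ => hP _ _)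

/-- positive sequence segments -/
def Good (x : ℕ → X) (n : ℕ) : Prop :=
  0 < π (win x 0) ∧ ∀ j < n, 0 < P (win x j) (x ((L + 1) + j))

lemma qseq_pos_of_good {x : ℕ → X} {n : ℕ} (h : Good P π x n) : 0 < qseq P π x n := by
  refine mul_pos h.1 (Finset.prod_pos ?_)
  intro j hj
  exact h.2 j (Finset.mem_range.mp hj)

lemma good_of_qseq_pos (hP : ∀ w z, 0 ≤ P w z) (hπ : ∀ w, 0 ≤ π w)
    {x : ℕ → X} {n : ℕ} (h : 0 < qseq P π x n) : Good P π x n := by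
  unfold qseq at h
  constructor
  · rcases lt_or_ge 0 (π (win x 0)) with h' | h'
    · exact h'
    · exfalso
      have h2 : 0 ≤ ∏ j ∈ Finset.range n, P (win x j) (x ((L + 1) + j)) :=
        Finset.prod_nonneg fun j _ => hP _ _
      nlinarith
  · intro j hj
    rcases lt_or_ge 0 (P (win x j) (x ((L + 1) + j))) with h' | h'
    · exact h'
    · exfalso
      have hz : P (win x j) (x ((L + 1) + j)) = 0 := le_antisymm h' (hP _ _)
      have : ∏ j ∈ Finset.range n, P (win x j) (x ((L + 1) + j)) = 0 :=
        Finset.prod_eq_zero (Finset.mem_range.mpr hj) hz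
      rw [this, mul_zero] at h
      exact lt_irrefl 0 h

lemma vext_lt {n : ℕ} (v : Fin n → X) {t : ℕ} (h : t < n) : vext v t = v ⟨t, h⟩ := dif_pos h

lemma vext_snoc_lt {n : ℕ} (v : Fin n → X) (z : X) {t : ℕ} (h : t < n) :
    vext (Fin.snoc v z : Fin (n+1) → X) t = vext v t := by
  rw [vext_lt _ (by omega : t < n + 1), vext_lt _ h]
  have h1 : (⟨t, by omega⟩ : Fin (n+1)) = Fin.castSucc ⟨t, h⟩ := rfl
  rw [h1, Fin.snoc_castSucc]

lemma vext_snoc_last {n : ℕ} (v : Fin n → X) (z : X) :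
    vext (Fin.snoc v z : Fin (n+1) → X) n = z := by
  rw [vext_lt _ (by omega : n < n + 1)]
  have h1 : (⟨n, by omega⟩ : Fin (n+1)) = Fin.last n := rfl
  rw [h1, Fin.snoc_last]

lemma vext_cons_succ {n : ℕ} (v : Fin n → X) (z : X) (s : ℕ) :
    vext (Fin.cons z v : Fin (n+1) → X) (s + 1) = vext v s := by
  unfold vext
  by_cases h : s < n
  · rw [dif_pos (by omega : s + 1 < n + 1), dif_pos h]
    have h1 : (⟨s + 1, by omega⟩ : Fin (n+1)) = Fin.succ ⟨s, h⟩ := rfl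
    rw [h1, Fin.cons_succ]
  · rw [dif_neg (by omega), dif_neg h]

lemma vext_cons_zero {n : ℕ} (v : Fin n → X) (z : X) :
    vext (Fin.cons z v : Fin (n+1) → X) 0 = z := by
  rw [vext_lt _ (by omega : 0 < n + 1)]
  rfl

/-- peel the last coordinate -/
lemma qq_peel_last (hP2 : ∀ w, ∑ z, P w z = 1) (n : ℕ) (t : Fin (L + 1 + n) → X) :
    ∑ z, qq P π (n + 1) (Fin.snoc t z) = qq P π n t := by
  have key : ∀ z, qq P π (n + 1) (Fin.snoc t z)
      = qseq P π (vext t) n * P (win (vext t) n) z := by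
    intro z
    unfold qq qseq
    rw [Finset.prod_range_succ]
    have hcong : ∀ s < L + 1 + n, vext (Fin.snoc t z : Fin (L+1+n+1) → X) s = vext t s :=
      fun s hs => vext_snoc_lt t z hs
    have h2 : ∀ j ≤ n, (win (vext (Fin.snoc t z : Fin (L+1+n+1) → X)) j : Fin (L+1) → X)
        = win (vext t) j := by
      intro j hj
      refine win_congr ?_
      intro i hi
      rw [hcong (j + i) (by omega)]
    have h3 : ∀ j < n, vext (Fin.snoc t z : Fin (L+1+n+1) → X) (L + 1 + j)
        = vext t (L + 1 + j) := fun j hj => hcong _ (by omega)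
    have h4 : vext (Fin.snoc t z : Fin (L+1+n+1) → X) (L + 1 + n) = z := vext_snoc_last t z
    rw [h2 0 (by omega), h4, h2 n (le_refl n)]
    rw [Finset.prod_congr rfl (fun j hj => by
      rw [h2 j (le_of_lt (Finset.mem_range.mp hj)), h3 j (Finset.mem_range.mp hj)])]
    ring
  rw [Finset.sum_congr rfl (fun z _ => key z), ← Finset.mul_sum, hP2, mul_one]
  rfl


/-- peel the first coordinate, using invariance of π -/
lemma qq_peel_first
    (hπinv : ∀ w' : Fin (L+1) → X, ∑ w, π w * doobLift P (Nat.succ_pos L) w w' = π w')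
    (n : ℕ) (t : Fin (L + 1 + n) → X) :
    ∑ z, qq P π (n + 1) (Fin.cons z t) = qq P π n t := by
  set w' : Fin (L+1) → X := win (vext t) 0 with hw'
  have key : ∀ z, qq P π (n + 1) (Fin.cons z t)
      = (π (front (Fin.cons z w')) *
          P (front (Fin.cons z w')) (w' ⟨L, Nat.lt_succ_self L⟩)) *
        ∏ j ∈ Finset.range n, P (win (vext t) j) (vext t (L + 1 + j)) := by
    intro z
    unfold qq qseq
    rw [Finset.prod_range_succ']
    have f1 : (win (vext (Fin.cons z t : Fin (L+1+n+1) → X)) 0 : Fin (L+1) → X)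
        = front (Fin.cons z w') := by
      funext i
      refine Fin.cases ?_ ?_ i
      · show vext (Fin.cons z t : Fin (L+1+n+1) → X) (0 + (0:ℕ)) = front (Fin.cons z w') 0
        rw [front_cons_zero]
        exact vext_cons_zero t z
      · intro j
        show vext (Fin.cons z t : Fin (L+1+n+1) → X) (0 + ((j:ℕ) + 1)) = _
        have e1 : 0 + ((j:ℕ) + 1) = (j:ℕ) + 1 := by omega
        rw [e1, vext_cons_succ]
        unfold front
        have e2 : Fin.castSucc (Fin.succ j) = Fin.succ (Fin.castSucc j) := rfl
        rw [e2, Fin.cons_succ]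
        rw [hw']
        show vext t (j:ℕ) = vext t (0 + ((Fin.castSucc j : Fin (L+1)) : ℕ))
        congr 1
        simp
    have f2 : ∀ j < n, (win (vext (Fin.cons z t : Fin (L+1+n+1) → X)) (j+1) : Fin (L+1) → X)
        = win (vext t) j := by
      intro j hj
      refine win_congr ?_
      intro i hi
      have e1 : j + 1 + i = (j + i) + 1 := by omega
      rw [e1, vext_cons_succ]
    have f3 : ∀ j < n, vext (Fin.cons z t : Fin (L+1+n+1) → X) (L + 1 + (j + 1))
        = vext t (L + 1 + j) := by
      intro j hj
      have e1 : L + 1 + (j + 1) = (L + 1 + j) + 1 := by omega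
      rw [e1, vext_cons_succ]
    have f4 : vext (Fin.cons z t : Fin (L+1+n+1) → X) (L + 1 + 0)
        = w' ⟨L, Nat.lt_succ_self L⟩ := by
      calc vext (Fin.cons z t : Fin (L+1+n+1) → X) (L + 1 + 0)
          = vext t L := vext_cons_succ t z L
        _ = w' ⟨L, Nat.lt_succ_self L⟩ := by
            rw [hw']
            show vext t L = vext t (0 + L)
            congr 1
            omega
    rw [f1, f4]
    rw [Finset.prod_congr rfl (fun j hj => by
      rw [f2 j (Finset.mem_range.mp hj), f3 j (Finset.mem_range.mp hj)])]
    ring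
  rw [Finset.sum_congr rfl (fun z _ => key z), ← Finset.sum_mul]
  have hcol := doobLift_col π P (Nat.succ_pos L) w'
  rw [hπinv w'] at hcol
  rw [← hcol]
  rfl

lemma qq_sum_one (hP2 : ∀ w, ∑ z, P w z = 1) (hπ2 : ∑ w, π w = 1) :
    ∀ n, ∑ v : Fin (L + 1 + n) → X, qq P π n v = 1 := by
  intro n
  induction n with
  | zero =>
    have hv : ∀ v : Fin (L + 1 + 0) → X, qq P π 0 v = π v := by
      intro v
      unfold qq qseq
      rw [Finset.prod_range_zero, mul_one]
      congr 1
      funext i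
      show vext v (0 + (i:ℕ)) = v i
      rw [vext_lt v (by have := i.isLt; omega : 0 + (i:ℕ) < L + 1 + 0)]
      congr 1
      apply Fin.ext
      show 0 + (i:ℕ) = (i:ℕ)
      omega
    rw [Finset.sum_congr rfl (fun v _ => hv v)]
    exact hπ2
  | succ n ih =>
    show ∑ v : Fin (L + 1 + n + 1) → X, qq P π (n+1) v = 1
    rw [sum_snoc_reindex (n := L + 1 + n) (fun v => qq P π (n+1) v)]
    rw [Finset.sum_congr rfl (fun t _ => qq_peel_last P π hP2 n t)]
    exact ih

/-- shift invariance: expectations of a window at offset 1 equal those at offset 0 -/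
lemma qq_shift (hP2 : ∀ w, ∑ z, P w z = 1)
    (hπinv : ∀ w' : Fin (L+1) → X, ∑ w, π w * doobLift P (Nat.succ_pos L) w w' = π w')
    (n a : ℕ) (ha : a + 1 ≤ L + 1 + n) (H : (Fin a → X) → ℝ) :
    ∑ v : Fin (L + 1 + n) → X,
        qq P π n v * H (fun i : Fin a => v ⟨(i:ℕ)+1, by have := i.isLt; omega⟩)
      = ∑ v : Fin (L + 1 + n) → X,
        qq P π n v * H (fun i : Fin a => v ⟨(i:ℕ), by have := i.isLt; omega⟩) := by
  have way1 : ∑ v' : Fin (L + 1 + n + 1) → X,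
      qq P π (n+1) v' * H (fun i : Fin a => v' ⟨(i:ℕ)+1, by have := i.isLt; omega⟩)
      = ∑ v : Fin (L + 1 + n) → X,
        qq P π n v * H (fun i : Fin a => v ⟨(i:ℕ)+1, by have := i.isLt; omega⟩) := by
    rw [sum_snoc_reindex (n := L + 1 + n) (fun v' => qq P π (n+1) v' *
      H (fun i : Fin a => v' ⟨(i:ℕ)+1, by have := i.isLt; omega⟩))]
    refine Finset.sum_congr rfl ?_
    intro t _
    have harg : ∀ z : X, (fun i : Fin a =>
        (Fin.snoc t z : Fin (L+1+n+1) → X) ⟨(i:ℕ)+1, by have := i.isLt; omega⟩)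
        = (fun i : Fin a => t ⟨(i:ℕ)+1, by have := i.isLt; omega⟩) := by
      intro z
      funext i
      exact snoc_mid t z (by have := i.isLt; omega) _
    calc ∑ z, qq P π (n+1) (Fin.snoc t z) *
          H (fun i : Fin a => (Fin.snoc t z : Fin (L+1+n+1) → X) ⟨(i:ℕ)+1, by have := i.isLt; omega⟩)
        = ∑ z, qq P π (n+1) (Fin.snoc t z) *
          H (fun i : Fin a => t ⟨(i:ℕ)+1, by have := i.isLt; omega⟩) := by
          refine Finset.sum_congr rfl fun z _ => ?_
          rw [harg z]
      _ = (∑ z, qq P π (n+1) (Fin.snoc t z)) *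
          H (fun i : Fin a => t ⟨(i:ℕ)+1, by have := i.isLt; omega⟩) := by
          rw [Finset.sum_mul]
      _ = qq P π n t * H (fun i : Fin a => t ⟨(i:ℕ)+1, by have := i.isLt; omega⟩) := by
          rw [qq_peel_last P π hP2 n t]
  have way2 : ∑ v' : Fin (L + 1 + n + 1) → X,
      qq P π (n+1) v' * H (fun i : Fin a => v' ⟨(i:ℕ)+1, by have := i.isLt; omega⟩)
      = ∑ v : Fin (L + 1 + n) → X,
        qq P π n v * H (fun i : Fin a => v ⟨(i:ℕ), by have := i.isLt; omega⟩) := by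
    rw [sum_cons_reindex (n := L + 1 + n) (fun v' => qq P π (n+1) v' *
      H (fun i : Fin a => v' ⟨(i:ℕ)+1, by have := i.isLt; omega⟩))]
    rw [Finset.sum_comm]
    refine Finset.sum_congr rfl ?_
    intro t _
    have harg : ∀ z : X, (fun i : Fin a =>
        (Fin.cons z t : Fin (L+1+n+1) → X) ⟨(i:ℕ)+1, by have := i.isLt; omega⟩)
        = (fun i : Fin a => t ⟨(i:ℕ), by have := i.isLt; omega⟩) := by
      intro z
      funext i
      exact cons_mid t z (by have := i.isLt; omega) _
    calc ∑ z, qq P π (n+1) (Fin.cons z t) *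
          H (fun i : Fin a => (Fin.cons z t : Fin (L+1+n+1) → X) ⟨(i:ℕ)+1, by have := i.isLt; omega⟩)
        = ∑ z, qq P π (n+1) (Fin.cons z t) *
          H (fun i : Fin a => t ⟨(i:ℕ), by have := i.isLt; omega⟩) := by
          refine Finset.sum_congr rfl fun z _ => ?_
          rw [harg z]
      _ = (∑ z, qq P π (n+1) (Fin.cons z t)) *
          H (fun i : Fin a => t ⟨(i:ℕ), by have := i.isLt; omega⟩) := by
          rw [Finset.sum_mul]
      _ = qq P π n t * H (fun i : Fin a => t ⟨(i:ℕ), by have := i.isLt; omega⟩) := by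
          rw [qq_peel_first P π hπinv n t]
  rw [← way1, way2]

end QDist

set_option maxHeartbeats 4000000 in
/-- Let `X` be an `ℓ`-th order Markov chain whose Doob lift has a single
recurrent class, started in an invariant distribution `π` on `X^ℓ`. If `Q` is the `k`-th
order Markov approximation of the lumped process `g(X)`, then `Q` has a unique invariant
distribution on `Y^k`. -/
theorem unique_invariant_of_lumping_higher_order
    {X Y : Type*} [Fintype X] [Fintype Y]
    (ℓ : ℕ) (hℓ : 1 ≤ ℓ)
    (P : (Fin ℓ → X) → X → ℝ) (hP : IsTransMat P)
    (hrec : SingleRecurrentClass (doobLift P hℓ))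
    (π : (Fin ℓ → X) → ℝ) (hπ : IsProbDist π)
    (hπinv : ∀ w' : Fin ℓ → X, ∑ w : Fin ℓ → X, π w * doobLift P hℓ w w' = π w')
    (hY : 1 < Fintype.card Y) (g : X → Y)
    (k : ℕ) (hk : 1 ≤ k)
    (m : ℕ) (hm : m = max (k + 1) ℓ)
    (q : (Fin m → X) → ℝ)
    (hq : ∀ v : Fin m → X,
      q v = π (fun i : Fin ℓ => v ⟨(i : ℕ), by have := i.isLt; omega⟩) *
        ∏ j : Fin (m - ℓ),
          P (fun i : Fin ℓ => v ⟨(j : ℕ) + (i : ℕ), by have := j.isLt; have := i.isLt; omega⟩)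
            (v ⟨ℓ + (j : ℕ), by have := j.isLt; omega⟩))
    (r : (Fin (k + 1) → Y) → ℝ)
    (hr : ∀ u : Fin (k + 1) → Y,
      r u = ∑ v : Fin m → X,
        if ∀ i : Fin (k + 1), g (v ⟨(i : ℕ), by have := i.isLt; omega⟩) = u i then q v else 0)
    (rk : (Fin k → Y) → ℝ) (hrk : ∀ w, rk w = ∑ z, r (Fin.snoc w z))
    (Q : (Fin k → Y) → Y → ℝ)
    (hQ : ∀ (w : Fin k → Y) (z : Y), Q w z =
      if 0 < rk w then r (Fin.snoc w z) / rk w else 1 / (Fintype.card Y : ℝ)) :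
    ∃! μ : (Fin k → Y) → ℝ, IsInvariantFor μ Q := by
  classical
  -- normalize ℓ = L + 1, k = κ + 1, m = L + 1 + n0
  obtain ⟨L, rfl⟩ : ∃ L, ℓ = L + 1 := ⟨ℓ - 1, by omega⟩
  obtain ⟨κ, rfl⟩ : ∃ κ, k = κ + 1 := ⟨k - 1, by omega⟩
  obtain ⟨n0, rfl⟩ : ∃ n0, m = L + 1 + n0 := ⟨m - (L + 1), by omega⟩
  have hmk : κ + 2 ≤ L + 1 + n0 := by omega
  -- X is nonempty
  have hXne : Nonempty X := by
    rcases isEmpty_or_nonempty X with hX | hX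
    · exfalso
      haveI : IsEmpty (Fin (L + 1) → X) := ⟨fun f => hX.false (f 0)⟩
      have := hπ.2
      rw [Finset.univ_eq_empty, Finset.sum_empty] at this
      norm_num at this
    · exact hX
  haveI := hXne
  -- q is the canonical word distribution
  have hq' : ∀ v : Fin (L + 1 + n0) → X, q v = qq P π n0 v := by
    intro v
    rw [hq v]
    unfold qq qseq
    congr 1
    · congr 1
      funext i
      show v ⟨(i : ℕ), _⟩ = vext v (0 + (i : ℕ))
      rw [vext_lt v (by have := i.isLt; omega : 0 + (i : ℕ) < L + 1 + n0)]
      congr 1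
      apply Fin.ext
      show (i : ℕ) = 0 + (i : ℕ)
      omega
    · have stepa : ∏ j : Fin (L + 1 + n0 - (L + 1)),
          P (fun i : Fin (L+1) => v ⟨(j : ℕ) + (i : ℕ), by have := j.isLt; have := i.isLt; omega⟩)
            (v ⟨L + 1 + (j : ℕ), by have := j.isLt; omega⟩)
          = ∏ j : Fin (L + 1 + n0 - (L + 1)),
            (fun jj : ℕ => P (fun i : Fin (L+1) => vext v (jj + (i : ℕ))) (vext v (L + 1 + jj))) (j : ℕ) := by
        refine Finset.prod_congr rfl ?_
        intro j _
        have hj := j.isLt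
        simp only
        congr 1
        · funext i
          have hi := i.isLt
          rw [vext_lt v (by omega : (j:ℕ) + (i:ℕ) < L + 1 + n0)]
        · rw [vext_lt v (by omega : L + 1 + (j:ℕ) < L + 1 + n0)]
      rw [stepa, Fin.prod_univ_eq_prod_range
        (fun jj : ℕ => P (fun i : Fin (L+1) => vext v (jj + (i:ℕ))) (vext v (L + 1 + jj)))
        (L + 1 + n0 - (L + 1)), show L + 1 + n0 - (L + 1) = n0 from by omega]
      rfl
  -- basic stochasticity facts
  have hPD : IsStochastic (doobLift P hℓ) := doobLift_stochastic P hP hℓ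
  have hπinv' : ∀ w' : Fin (L+1) → X,
      ∑ w, π w * doobLift P (Nat.succ_pos L) w w' = π w' := hπinv
  -- recurrence structure of the lifted X chain
  have hrecπ : ∀ s, 0 < π s → Recurrent (doobLift P hℓ) s := by
    intro s hs
    exact invariant_supp_recurrent hPD hπ.1 hπinv hs
  have hπR : ∀ s, Recurrent (doobLift P hℓ) s → 0 < π s := by
    intro s hs
    obtain ⟨a, ha⟩ := exists_pos_of_sum_one hπ.2
    exact invariant_pos_accessible hPD.1 hπ.1 hπinv ha (hrec.2 a s (hrecπ a ha) hs)
  -- positivity of π along good paths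
  have hGP : ∀ (x : ℕ → X) (N : ℕ), Good P π x N → ∀ t ≤ N, 0 < π (win (L := L) x t) := by
    intro x N hgood t htN
    rcases Nat.eq_zero_or_pos t with rfl | ht
    · exact hgood.1
    · have hchain : ∀ τ < t, 0 < (doobLift P hℓ) (win (L := L) x τ) (win (L := L) x (τ + 1)) := by
        intro τ hτ
        have hstep := hgood.2 τ (by omega)
        have := doobLift_win_step P hℓ x τ
        show 0 < doobLift P hℓ (fun i : Fin (L+1) => x (τ + (i:ℕ))) (fun i : Fin (L+1) => x (τ + 1 + (i:ℕ)))
        rw [this]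
        show 0 < P (win (L := L) x τ) (x (τ + (L + 1)))
        rw [show τ + (L + 1) = L + 1 + τ from by omega]
        exact hstep
      have hpos := pow_pos_of_chain hPD.1 (fun τ => win (L := L) x τ) t hchain
      have hacc : Accessible (doobLift P hℓ) (win (L := L) x 0) (win (L := L) x t) := ⟨t, ht, hpos⟩
      exact hπR _ (recurrent_of_accessible (hrecπ _ hgood.1) hacc hPD.1)
  -- nonnegativity and total mass of q
  have hq0 : ∀ v, 0 ≤ q v := by
    intro v
    rw [hq' v]
    exact qseq_nonneg P π hP.1 hπ.1 _ _
  have hqsum : ∑ v, q v = 1 := by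
    rw [Finset.sum_congr rfl fun v _ => hq' v]
    exact qq_sum_one P π hP.2 hπ.2 n0
  -- nonnegativity of r, rk
  have hr0 : ∀ u, 0 ≤ r u := by
    intro u
    rw [hr u]
    refine Finset.sum_nonneg fun v _ => ?_
    by_cases hcond : ∀ i : Fin (κ + 1 + 1), g (v ⟨(i : ℕ), by have := i.isLt; omega⟩) = u i
    · rw [if_pos hcond]
      exact hq0 v
    · rw [if_neg hcond]
  have hrk0 : ∀ w, 0 ≤ rk w := by
    intro w
    rw [hrk w]
    exact Finset.sum_nonneg fun z _ => hr0 _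
  -- total mass of r and rk
  have hrsum : ∑ u, r u = 1 := by
    rw [Finset.sum_congr rfl fun u _ => hr u, Finset.sum_comm]
    rw [← hqsum]
    refine Finset.sum_congr rfl fun v _ => ?_
    have key : ∀ u : Fin (κ + 2) → Y,
        (if ∀ i : Fin (κ + 2), g (v ⟨(i : ℕ), by have := i.isLt; omega⟩) = u i then q v else 0)
        = if u = (fun i : Fin (κ + 2) => g (v ⟨(i : ℕ), by have := i.isLt; omega⟩)) then q v else 0 := by
      intro u
      congr 1
      simp only [eq_iff_iff]
      constructor
      · intro h
        funext i
        exact (h i).symm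
      · intro h i
        rw [h]
    rw [Finset.sum_congr rfl fun u _ => key u]
    rw [Finset.sum_ite_eq' Finset.univ _ (fun _ => q v)]
    simp
  have hrksum : ∑ w, rk w = 1 := by
    rw [Finset.sum_congr rfl fun w _ => hrk w]
    rw [← sum_snoc_reindex (n := κ + 1) r]
    exact hrsum
  -- Q is a transition matrix
  have hcardY : (0:ℝ) < (Fintype.card Y : ℝ) := by
    have : 0 < Fintype.card Y := by omega
    exact_mod_cast this
  have hQtrans : IsTransMat Q := by
    constructor
    · intro w z
      rw [hQ w z]
      split
      · exact div_nonneg (hr0 _) (hrk0 _)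
      · positivity
    · intro w
      by_cases hw : 0 < rk w
      · rw [Finset.sum_congr rfl fun z _ => by rw [hQ w z, if_pos hw]]
        rw [← Finset.sum_div, ← hrk w, div_self (ne_of_gt hw)]
      · rw [Finset.sum_congr rfl fun z _ => by rw [hQ w z, if_neg hw]]
        rw [Finset.sum_const, Finset.card_univ, nsmul_eq_mul]
        field_simp
  have hDQ0 : IsStochastic (doobLift Q hk) := doobLift_stochastic Q hQtrans hk
  have hQpos : ∀ (w : Fin (κ+1) → Y) z, 0 < r (Fin.snoc w z) → 0 < Q w z := by
    intro w z hrp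
    have hwpos : 0 < rk w := by
      rw [hrk w]
      calc (0:ℝ) < r (Fin.snoc w z) := hrp
        _ ≤ ∑ z', r (Fin.snoc w z') :=
          Finset.single_le_sum (f := fun z' => r (Fin.snoc w z')) (fun z' _ => hr0 _)
            (Finset.mem_univ z)
    rw [hQ w z, if_pos hwpos]
    exact div_pos hrp hwpos
  have hQnull : ∀ (w : Fin (κ+1) → Y) z, rk w = 0 → 0 < Q w z := by
    intro w z hw
    rw [hQ w z, if_neg (by rw [hw]; exact lt_irrefl 0)]
    positivity
  -- stationarity of the word distribution
  have hstat : ∀ w : Fin (κ + 1) → Y, ∑ z0, r (Fin.cons z0 w) = ∑ z, r (Fin.snoc w z) := by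
    intro w
    set H : (Fin (κ + 1) → X) → ℝ :=
      fun u => if ∀ i : Fin (κ + 1), g (u i) = w i then (1:ℝ) else 0 with hH
    have hite : ∀ (c : Prop) [Decidable c] (v : Fin (L + 1 + n0) → X) (u : Fin (κ+1) → X),
        (c ↔ ∀ i : Fin (κ + 1), g (u i) = w i) →
        (if c then q v else 0) = qq P π n0 v * H u := by
      intro c _ v u hciff
      simp only [hH]
      by_cases hc : c
      · rw [if_pos hc, if_pos (hciff.mp hc), mul_one, hq' v]
      · rw [if_neg hc, if_neg (fun hh => hc (hciff.mpr hh)), mul_zero]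
    have hlhs : ∑ z0, r (Fin.cons z0 w)
        = ∑ v : Fin (L + 1 + n0) → X, qq P π n0 v *
            H (fun i : Fin (κ + 1) => v ⟨(i:ℕ)+1, by have := i.isLt; omega⟩) := by
      rw [Finset.sum_congr rfl fun z0 _ => hr (Fin.cons z0 w)]
      rw [Finset.sum_comm]
      refine Finset.sum_congr rfl fun v _ => ?_
      have hiff : ∀ z0 : Y,
          (∀ i : Fin (κ + 2), g (v ⟨(i:ℕ), by have := i.isLt; omega⟩)
              = (Fin.cons z0 w : Fin (κ+2) → Y) i)
          ↔ (z0 = g (v ⟨((0 : Fin (κ+2)) : ℕ), by have := (0 : Fin (κ+2)).isLt; omega⟩) ∧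
             ∀ i : Fin (κ + 1), g (v ⟨(i:ℕ)+1, by have := i.isLt; omega⟩) = w i) := by
        intro z0
        constructor
        · intro h
          constructor
          · have h0 := h 0
            rw [Fin.cons_zero] at h0
            exact h0.symm
          · intro i
            have hi := h (Fin.succ i)
            rw [Fin.cons_succ] at hi
            exact hi
        · rintro ⟨hz0, hrest⟩ i
          refine Fin.cases ?_ ?_ i
          · rw [Fin.cons_zero]
            exact hz0.symm
          · intro j
            rw [Fin.cons_succ]
            exact hrest j
      calc ∑ z0, (if ∀ i : Fin (κ + 2), g (v ⟨(i:ℕ), by have := i.isLt; omega⟩)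
              = (Fin.cons z0 w : Fin (κ+2) → Y) i then q v else 0)
          = ∑ z0, (if z0 = g (v ⟨((0 : Fin (κ+2)) : ℕ), by have := (0 : Fin (κ+2)).isLt; omega⟩)
              then (if ∀ i : Fin (κ + 1), g (v ⟨(i:ℕ)+1, by have := i.isLt; omega⟩) = w i
                then q v else 0) else 0) := by
            refine Finset.sum_congr rfl fun z0 _ => ?_
            rw [if_congr (hiff z0) rfl rfl, ite_and]
        _ = (if ∀ i : Fin (κ + 1), g (v ⟨(i:ℕ)+1, by have := i.isLt; omega⟩) = w i
              then q v else 0) := by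
            rw [Finset.sum_ite_eq' Finset.univ
              (g (v ⟨((0 : Fin (κ+2)) : ℕ), by have := (0 : Fin (κ+2)).isLt; omega⟩))
              (fun _ => (if ∀ i : Fin (κ + 1), g (v ⟨(i:ℕ)+1, by have := i.isLt; omega⟩) = w i
                then q v else 0))]
            simp
        _ = qq P π n0 v * H (fun i : Fin (κ + 1) => v ⟨(i:ℕ)+1, by have := i.isLt; omega⟩) :=
            hite _ v _ Iff.rfl
    have hrhs : ∑ z, r (Fin.snoc w z)
        = ∑ v : Fin (L + 1 + n0) → X, qq P π n0 v *
            H (fun i : Fin (κ + 1) => v ⟨(i:ℕ), by have := i.isLt; omega⟩) := by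
      rw [Finset.sum_congr rfl fun z _ => hr (Fin.snoc w z)]
      rw [Finset.sum_comm]
      refine Finset.sum_congr rfl fun v _ => ?_
      have hiff : ∀ z : Y,
          (∀ i : Fin (κ + 2), g (v ⟨(i:ℕ), by have := i.isLt; omega⟩)
              = (Fin.snoc w z : Fin (κ+2) → Y) i)
          ↔ (z = g (v ⟨((Fin.last (κ+1)) : ℕ), by have := (Fin.last (κ+1)).isLt; omega⟩) ∧
             ∀ i : Fin (κ + 1), g (v ⟨(i:ℕ), by have := i.isLt; omega⟩) = w i) := by
        intro z
        constructor
        · intro h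
          constructor
          · have h0 := h (Fin.last (κ+1))
            rw [Fin.snoc_last] at h0
            exact h0.symm
          · intro i
            have hi := h (Fin.castSucc i)
            rw [Fin.snoc_castSucc] at hi
            exact hi
        · rintro ⟨hz, hrest⟩ i
          refine Fin.lastCases ?_ ?_ i
          · rw [Fin.snoc_last]
            exact hz.symm
          · intro j
            rw [Fin.snoc_castSucc]
            exact hrest j
      calc ∑ z, (if ∀ i : Fin (κ + 2), g (v ⟨(i:ℕ), by have := i.isLt; omega⟩)
              = (Fin.snoc w z : Fin (κ+2) → Y) i then q v else 0)
          = ∑ z, (if z = g (v ⟨((Fin.last (κ+1)) : ℕ), by have := (Fin.last (κ+1)).isLt; omega⟩)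
              then (if ∀ i : Fin (κ + 1), g (v ⟨(i:ℕ), by have := i.isLt; omega⟩) = w i
                then q v else 0) else 0) := by
            refine Finset.sum_congr rfl fun z _ => ?_
            rw [if_congr (hiff z) rfl rfl, ite_and]
        _ = (if ∀ i : Fin (κ + 1), g (v ⟨(i:ℕ), by have := i.isLt; omega⟩) = w i
              then q v else 0) := by
            rw [Finset.sum_ite_eq' Finset.univ
              (g (v ⟨((Fin.last (κ+1)) : ℕ), by have := (Fin.last (κ+1)).isLt; omega⟩))
              (fun _ => (if ∀ i : Fin (κ + 1), g (v ⟨(i:ℕ), by have := i.isLt; omega⟩) = w i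
                then q v else 0))]
            simp
        _ = qq P π n0 v * H (fun i : Fin (κ + 1) => v ⟨(i:ℕ), by have := i.isLt; omega⟩) :=
            hite _ v _ Iff.rfl
    rw [hlhs, hrhs]
    exact qq_shift P π hP.2 hπinv' n0 (κ+1) (by omega) H
  -- positivity of r along good paths
  have hrpos : ∀ (x : ℕ → X) (N t : ℕ), Good P π x N → t + n0 ≤ N →
      0 < r (fun i : Fin (κ + 2) => g (x (t + (i : ℕ)))) := by
    intro x N t hgood htN
    rw [hr _]
    set vstar : Fin (L + 1 + n0) → X := fun i => x (t + (i : ℕ)) with hvstar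
    have hqpos : 0 < q vstar := by
      rw [hq' vstar]
      show 0 < qseq P π (vext vstar) n0
      have hcong : qseq P π (vext vstar) n0 = qseq P π (fun s => x (t + s)) n0 := by
        refine qseq_congr P π ?_
        intro s hs
        rw [vext_lt vstar hs]
      rw [hcong]
      refine qseq_pos_of_good P π ?_
      constructor
      · have hwin : (win (L := L) (fun s => x (t + s)) 0 : Fin (L+1) → X)
            = win (L := L) x t := by
          refine win_congr ?_
          intro i hi
          show x (t + (0 + i)) = x (t + i)
          congr 1
          omega
        rw [hwin]
        exact hGP x N hgood t (by omega)
      · intro j hj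
        have hwin : (win (L := L) (fun s => x (t + s)) j : Fin (L+1) → X)
            = win (L := L) x (t + j) := by
          refine win_congr ?_
          intro i hi
          show x (t + (j + i)) = x (t + j + i)
          congr 1
          omega
        rw [hwin]
        have harg : (fun s => x (t + s)) (L + 1 + j) = x (L + 1 + (t + j)) := by
          show x (t + (L + 1 + j)) = x (L + 1 + (t + j))
          congr 1
          omega
        rw [harg]
        exact hgood.2 (t + j) (by omega)
    have hcondstar : ∀ i : Fin (κ + 2),
        g (vstar ⟨(i : ℕ), by have := i.isLt; omega⟩) = g (x (t + (i : ℕ))) := fun i => rfl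
    calc (0:ℝ) < q vstar := hqpos
      _ = if ∀ i : Fin (κ + 2), g (vstar ⟨(i : ℕ), by have := i.isLt; omega⟩)
            = g (x (t + (i : ℕ))) then q vstar else 0 := by rw [if_pos hcondstar]
      _ ≤ ∑ v : Fin (L + 1 + n0) → X,
          if ∀ i : Fin (κ + 2), g (v ⟨(i : ℕ), by have := i.isLt; omega⟩)
            = g (x (t + (i : ℕ))) then q v else 0 := by
          refine Finset.single_le_sum (f := fun v => if ∀ i : Fin (κ + 2),
            g (v ⟨(i : ℕ), by have := i.isLt; omega⟩) = g (x (t + (i : ℕ))) then q v else 0)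
            ?_ (Finset.mem_univ vstar)
          intro v _
          show (0:ℝ) ≤ if ∀ i : Fin (κ + 2),
              g (v ⟨(i : ℕ), by have := i.isLt; omega⟩) = g (x (t + (i : ℕ))) then q v else 0
          by_cases hcond : ∀ i : Fin (κ + 2),
              g (v ⟨(i : ℕ), by have := i.isLt; omega⟩) = g (x (t + (i : ℕ)))
          · rw [if_pos hcond]; exact hq0 v
          · rw [if_neg hcond]
  -- decoding positive rk into a good path
  have hrk_to_path : ∀ w : Fin (κ + 1) → Y, 0 < rk w →
      ∃ x : ℕ → X, Good P π x n0 ∧ ∀ i : Fin (κ + 1), g (x (i : ℕ)) = w i := by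
    intro w hw
    rw [hrk w] at hw
    have hz : ∃ z, 0 < r (Fin.snoc w z) := by
      by_contra hcon
      push_neg at hcon
      have : ∑ z, r (Fin.snoc w z) ≤ 0 := Finset.sum_nonpos fun z _ => hcon z
      linarith
    obtain ⟨z, hz⟩ := hz
    rw [hr _] at hz
    have hv : ∃ v : Fin (L + 1 + n0) → X,
        0 < if ∀ i : Fin (κ + 2), g (v ⟨(i : ℕ), by have := i.isLt; omega⟩)
          = (Fin.snoc w z : Fin (κ+2) → Y) i then q v else 0 := by
      by_contra hcon
      push_neg at hcon
      have : ∑ v : Fin (L + 1 + n0) → X,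
          (if ∀ i : Fin (κ + 2), g (v ⟨(i : ℕ), by have := i.isLt; omega⟩)
            = (Fin.snoc w z : Fin (κ+2) → Y) i then q v else 0) ≤ 0 :=
        Finset.sum_nonpos fun v _ => hcon v
      linarith
    obtain ⟨v, hv⟩ := hv
    have hcond : ∀ i : Fin (κ + 2), g (v ⟨(i : ℕ), by have := i.isLt; omega⟩)
        = (Fin.snoc w z : Fin (κ+2) → Y) i := by
      by_contra hc
      rw [if_neg hc] at hv
      exact lt_irrefl 0 hv
    have hqv : 0 < q v := by rwa [if_pos hcond] at hv
    refine ⟨vext v, ?_, ?_⟩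
    · rw [hq' v] at hqv
      exact good_of_qseq_pos P π hP.1 hπ.1 hqv
    · intro i
      have h1 := hcond ⟨(i : ℕ), by have := i.isLt; omega⟩
      have h2 : (Fin.snoc w z : Fin (κ+2) → Y) (⟨(i : ℕ), by have := i.isLt; omega⟩ : Fin (κ+2)) = w i := by
        rw [snoc_mid w z i.isLt]
      rw [h2] at h1
      rw [← h1, vext_lt v (by have := i.isLt; omega : (i : ℕ) < L + 1 + n0)]
  -- communication within the positive class
  have hLkComm : ∀ u w : Fin (κ+1) → Y, 0 < rk u → 0 < rk w →
      Accessible (doobLift Q hk) u w := by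
    intro u w hu hw
    obtain ⟨xu, hxu_good, hxu_letters⟩ := hrk_to_path u hu
    obtain ⟨xw, hxw_good, hxw_letters⟩ := hrk_to_path w hw
    have hs : 0 < π (win (L := L) xu n0) := hGP xu n0 hxu_good n0 (le_refl _)
    have ht' : 0 < π (win (L := L) xw 0) := hxw_good.1
    obtain ⟨nc, hnc1, hncpos⟩ := hrec.2 _ _ (hrecπ _ hs) (hrecπ _ ht')
    obtain ⟨c, hc0, hcn, hcstep⟩ := chain_of_pow_pos hPD.1 nc _ _ hncpos
    obtain ⟨xc, hxcwin, hxcstep⟩ := doobLift_chain_decode P hℓ c nc hcstep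
    set p := n0 + nc with hp
    set xx : ℕ → X := fun t =>
      if t < n0 then xu t else if t < p then xc (t - n0) else xw (t - p) with hxx
    -- overlap identities
    have hO1 : ∀ i : ℕ, i ≤ L → xc i = xu (n0 + i) := by
      intro i hi
      have h1 := hxcwin 0 (by omega)
      rw [hc0] at h1
      have h2 := congrFun h1 (⟨i, by omega⟩ : Fin (L+1))
      have h3 : xc (0 + i) = xu (n0 + i) := h2.symm
      rw [show 0 + i = i from by omega] at h3
      exact h3
    have hO2 : ∀ i : ℕ, i ≤ L → xc (nc + i) = xw i := by
      intro i hi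
      have h1 := hxcwin nc (le_refl _)
      rw [hcn] at h1
      have h2 := congrFun h1 (⟨i, by omega⟩ : Fin (L+1))
      have h3 : xc (nc + i) = xw (0 + i) := h2.symm
      rw [show 0 + i = i from by omega] at h3
      exact h3
    -- region formulas
    have hR3 : ∀ t, p ≤ t → xx t = xw (t - p) := by
      intro t ht
      simp only [hxx]
      rw [if_neg (by omega), if_neg (by omega)]
    have hR2 : ∀ t, n0 ≤ t → t ≤ p + L → xx t = xc (t - n0) := by
      intro t ht1 ht2
      by_cases h : t < p
      · simp only [hxx]
        rw [if_neg (by omega), if_pos h]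
      · rw [hR3 t (by omega)]
        have h3 := hO2 (t - p) (by omega)
        rw [show nc + (t - p) = t - n0 from by omega] at h3
        exact h3.symm
    have hR1 : ∀ t, t < L + 1 + n0 → xx t = xu t := by
      intro t ht
      by_cases h : t < n0
      · simp only [hxx]
        rw [if_pos h]
      · rw [hR2 t (by omega) (by omega)]
        have h3 := hO1 (t - n0) (by omega)
        rw [show n0 + (t - n0) = t from by omega] at h3
        exact h3
    -- the assembled path is good
    have hggood : Good P π xx (p + n0) := by
      constructor
      · have hwin : (win (L := L) xx 0 : Fin (L+1) → X) = win (L := L) xu 0 := by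
          refine win_congr ?_
          intro i hi
          exact hR1 (0 + i) (by omega)
        rw [hwin]
        exact hxu_good.1
      · intro t htN
        by_cases h1 : t < n0
        · have hwin : (win (L := L) xx t : Fin (L+1) → X) = win (L := L) xu t := by
            refine win_congr ?_
            intro i hi
            exact hR1 (t + i) (by omega)
          have harg : xx (L + 1 + t) = xu (L + 1 + t) := hR1 (L + 1 + t) (by omega)
          rw [hwin, harg]
          exact hxu_good.2 t h1
        · by_cases h2 : t < p
          · have hwin : (win (L := L) xx t : Fin (L+1) → X)
                = fun i : Fin (L+1) => xc (t - n0 + (i : ℕ)) := by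
              funext i
              show xx (t + (i : ℕ)) = xc (t - n0 + (i : ℕ))
              rw [hR2 (t + (i:ℕ)) (by omega) (by have := i.isLt; omega)]
              congr 1
              omega
            have harg : xx (L + 1 + t) = xc (t - n0 + (L + 1)) := by
              rw [hR2 (L + 1 + t) (by omega) (by omega)]
              congr 1
              omega
            rw [hwin, harg]
            exact hxcstep (t - n0) (by omega)
          · have hwin : (win (L := L) xx t : Fin (L+1) → X) = win (L := L) xw (t - p) := by
              refine win_congr ?_
              intro i hi
              rw [hR3 (t + i) (by omega)]
              congr 1
              omega
            have harg : xx (L + 1 + t) = xw (L + 1 + (t - p)) := by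
              rw [hR3 (L + 1 + t) (by omega)]
              congr 1
              omega
            rw [hwin, harg]
            exact hxw_good.2 (t - p) (by omega)
    -- the word-level chain
    set σ : ℕ → Y := fun t => g (xx t) with hσ
    set wk : ℕ → (Fin (κ+1) → Y) := fun τ => fun i : Fin (κ+1) => σ (τ + (i : ℕ)) with hwk
    have hchainQ : ∀ τ < p, 0 < (doobLift Q hk) (wk τ) (wk (τ + 1)) := by
      intro τ hτ
      show 0 < (doobLift Q hk) (fun i : Fin (κ+1) => σ (τ + (i : ℕ)))
        (fun i : Fin (κ+1) => σ (τ + 1 + (i : ℕ)))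
      rw [doobLift_win_step Q hk σ τ]
      apply hQpos
      have hsnocw : Fin.snoc (fun i : Fin (κ+1) => σ (τ + (i : ℕ))) (σ (τ + (κ + 1)))
          = fun i : Fin (κ+2) => σ (τ + (i : ℕ)) := snoc_window σ τ
      rw [hsnocw]
      exact hrpos xx (p + n0) τ hggood (by omega)
    have hend : wk 0 = u := by
      funext i
      show g (xx (0 + (i : ℕ))) = u i
      rw [hR1 (0 + (i:ℕ)) (by have := i.isLt; omega)]
      rw [show 0 + (i:ℕ) = (i:ℕ) from by omega]
      exact hxu_letters i
    have hstartw : wk p = w := by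
      funext i
      show g (xx (p + (i : ℕ))) = w i
      rw [hR3 (p + (i:ℕ)) (by omega)]
      rw [show p + (i:ℕ) - p = (i:ℕ) from by omega]
      exact hxw_letters i
    have hpos := pow_pos_of_chain hDQ0.1 wk p hchainQ
    rw [hend, hstartw] at hpos
    exact ⟨p, by omega, hpos⟩
  -- from anywhere we can reach the positive class
  have hReachLk : ∀ w : Fin (κ+1) → Y, ∃ w', Accessible (doobLift Q hk) w w' ∧ 0 < rk w' := by
    obtain ⟨wp, hwp⟩ := exists_pos_of_sum_one hrksum
    intro w
    by_cases hw : 0 < rk w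
    · exact ⟨w, hLkComm w w hw hw, hw⟩
    have hw0 : rk w = 0 := le_antisymm (not_lt.mp hw) (hrk0 w)
    set st : ℕ → (Fin (κ+1) → Y) := fun s => fun i : Fin (κ+1) =>
      if h : (i:ℕ) + s < κ + 1 then w ⟨(i:ℕ) + s, h⟩
      else if h2 : (i:ℕ) + s - (κ+1) < κ+1 then wp ⟨(i:ℕ) + s - (κ+1), h2⟩ else wp i
      with hst
    have hst0 : st 0 = w := by
      funext i
      simp only [hst]
      rw [dif_pos (by have := i.isLt; omega : (i:ℕ) + 0 < κ + 1)]
      congr 1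
    have hstfin : st (κ+1) = wp := by
      funext i
      simp only [hst]
      rw [dif_neg (by omega : ¬ ((i:ℕ) + (κ+1) < κ + 1))]
      rw [dif_pos (by have := i.isLt; omega : (i:ℕ) + (κ+1) - (κ+1) < κ+1)]
      congr 1
      apply Fin.ext
      show (i:ℕ) + (κ+1) - (κ+1) = (i:ℕ)
      omega
    have hstep : ∀ s (hs : s < κ+1), st (s+1) = shiftSnoc (st s) (wp ⟨s, hs⟩) := by
      intro s hs
      funext i
      simp only [hst, shiftSnoc]
      by_cases hi : (i:ℕ) + 1 < κ + 1
      · rw [dif_pos hi]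
        by_cases h2 : (i:ℕ) + (s+1) < κ + 1
        · rw [dif_pos h2, dif_pos (by omega : (i:ℕ) + 1 + s < κ + 1)]
          congr 1
          apply Fin.ext
          show (i:ℕ) + (s+1) = (i:ℕ) + 1 + s
          omega
        · rw [dif_neg h2, dif_neg (by omega : ¬ ((i:ℕ) + 1 + s < κ + 1))]
          rw [dif_pos (by have := i.isLt; omega : (i:ℕ) + (s+1) - (κ+1) < κ+1),
            dif_pos (by have := i.isLt; omega : (i:ℕ) + 1 + s - (κ+1) < κ+1)]
          congr 1
          apply Fin.ext
          show (i:ℕ) + (s+1) - (κ+1) = (i:ℕ) + 1 + s - (κ+1)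
          omega
      · rw [dif_neg hi]
        have hik : (i:ℕ) = κ := by have := i.isLt; omega
        rw [dif_neg (by omega : ¬ ((i:ℕ) + (s+1) < κ + 1))]
        rw [dif_pos (by omega : (i:ℕ) + (s+1) - (κ+1) < κ+1)]
        congr 1
        apply Fin.ext
        show (i:ℕ) + (s+1) - (κ+1) = s
        omega
    have claim : ∀ s, s ≤ κ + 1 → ∃ w',
        (Accessible (doobLift Q hk) w w' ∨ (w' = w ∧ s = 0)) ∧
        (0 < rk w' ∨ w' = st s) := by
      intro s
      induction s with
      | zero =>
        intro _
        exact ⟨w, Or.inr ⟨rfl, rfl⟩, Or.inr hst0.symm⟩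
      | succ s ih =>
        intro hs1
        obtain ⟨w', hacc, hpos⟩ := ih (by omega)
        rcases hpos with hpos | hpos
        · -- w' already in the positive class
          have haccw : Accessible (doobLift Q hk) w w' := by
            rcases hacc with h | ⟨hweq, _⟩
            · exact h
            · exfalso
              rw [hweq] at hpos
              rw [hw0] at hpos
              exact lt_irrefl 0 hpos
          exact ⟨w', Or.inl haccw, Or.inl hpos⟩
        · by_cases hp2 : 0 < rk w'
          · have haccw : Accessible (doobLift Q hk) w w' := by
              rcases hacc with h | ⟨hweq, _⟩
              · exact h
              · exfalso
                rw [hweq, hw0] at hp2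
                exact lt_irrefl 0 hp2
            exact ⟨w', Or.inl haccw, Or.inl hp2⟩
          · have hz : rk w' = 0 := le_antisymm (not_lt.mp hp2) (hrk0 w')
            have hstep1 : 0 < (doobLift Q hk) w' (shiftSnoc w' (wp ⟨s, by omega⟩)) := by
              rw [doobLift_shiftSnoc]
              exact hQnull w' _ hz
            have hacc1 : Accessible (doobLift Q hk) w' (st (s+1)) := by
              rw [hstep s (by omega), ← hpos]
              refine ⟨1, le_refl 1, ?_⟩
              exact lt_of_lt_of_eq hstep1 (congrFun (congrFun (@pow_one _ (@Semiring.toMonoid _ (@Matrix.semiring _ ℝ _ _ fun a b => Classical.propDecidable (a = b))) (doobLift Q hk)) w') _).symm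
            have haccw : Accessible (doobLift Q hk) w (st (s+1)) := by
              rcases hacc with h | ⟨hweq, _⟩
              · exact accessible_trans hDQ0.1 h hacc1
              · rw [← hweq]
                exact hacc1
            exact ⟨st (s+1), Or.inl haccw, Or.inr rfl⟩
    obtain ⟨w', hacc, hpos⟩ := claim (κ+1) (le_refl _)
    have hrkpos : 0 < rk w' := by
      rcases hpos with h | h
      · exact h
      · rw [h, hstfin]
        exact hwp
    rcases hacc with h | ⟨_, habs⟩
    · exact ⟨w', h, hrkpos⟩
    · exact absurd habs (by omega)
  -- single recurrent class for the lifted Q chain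
  have hsrcQ : SingleRecurrentClass (doobLift Q hk) := by
    have hDQ : IsStochastic (doobLift Q hk) := doobLift_stochastic Q hQtrans hk
    have hrecLk : ∀ w : Fin (κ+1) → Y, 0 < rk w → Recurrent (doobLift Q hk) w := by
      intro w hw j hacc
      obtain ⟨j', hj', hj'pos⟩ := hReachLk j
      exact accessible_trans hDQ.1 hj' (hLkComm j' w hj'pos hw)
    constructor
    · obtain ⟨w, hw⟩ := exists_pos_of_sum_one hrksum
      exact ⟨w, hrecLk w hw⟩
    · intro w1 w2 h1 h2
      obtain ⟨u1, hu1, hu1pos⟩ := hReachLk w1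
      obtain ⟨u2, hu2, hu2pos⟩ := hReachLk w2
      have hu2w2 : Accessible (doobLift Q hk) u2 w2 := h2 u2 hu2
      exact accessible_trans hDQ.1 hu1
        (accessible_trans hDQ.1 (hLkComm u1 u2 hu1pos hu2pos) hu2w2)
  -- the invariance equation is equivalent to matrix invariance for the Doob lift
  have hDQ : IsStochastic (doobLift Q hk) := doobLift_stochastic Q hQtrans hk
  have hlastcons : ∀ (z0 : Y) (w : Fin (κ+1) → Y),
      (Fin.cons z0 w : Fin (κ+2) → Y) (Fin.last (κ+1)) = w ⟨κ, Nat.lt_succ_self κ⟩ := by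
    intro z0 w
    have h1 : Fin.last (κ+1) = Fin.succ (Fin.last κ) := rfl
    rw [h1, Fin.cons_succ]
    rfl
  have hequiv : ∀ μ : (Fin (κ+1) → Y) → ℝ,
      (∀ w, ∑ w'', μ w'' * doobLift Q hk w'' w = μ w) ↔
      (∀ w : Fin (κ+1) → Y,
        μ w = ∑ z0 : Y, μ (front (Fin.cons z0 w)) *
          Q (front (Fin.cons z0 w)) ((Fin.cons z0 w : Fin (κ + 2) → Y) (Fin.last (κ+1)))) := by
    intro μ
    have key : ∀ w : Fin (κ+1) → Y,
        ∑ w'', μ w'' * doobLift Q hk w'' w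
        = ∑ z0 : Y, μ (front (Fin.cons z0 w)) *
          Q (front (Fin.cons z0 w)) ((Fin.cons z0 w : Fin (κ + 2) → Y) (Fin.last (κ+1))) := by
      intro w
      rw [doobLift_col μ Q hk w]
      refine Finset.sum_congr rfl fun z0 _ => ?_
      rw [hlastcons z0 w]
    constructor
    · intro h w
      rw [← key w, h w]
    · intro h w
      rw [key w, ← h w]
  -- invariance of rk
  have hinv_rk : ∀ w : Fin (κ+1) → Y,
      rk w = ∑ z0 : Y, rk (front (Fin.cons z0 w)) *
        Q (front (Fin.cons z0 w)) ((Fin.cons z0 w : Fin (κ + 2) → Y) (Fin.last (κ+1))) := by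
    intro w
    have hterm : ∀ z0 : Y, rk (front (Fin.cons z0 w)) *
        Q (front (Fin.cons z0 w)) ((Fin.cons z0 w : Fin (κ + 2) → Y) (Fin.last (κ+1)))
        = r (Fin.cons z0 w) := by
      intro z0
      rw [hlastcons z0 w]
      have hsnoc : Fin.snoc (front (Fin.cons z0 w)) (w ⟨κ, Nat.lt_succ_self κ⟩)
          = (Fin.cons z0 w : Fin (κ+2) → Y) := by
        have h1 : front (Fin.cons z0 w) = Fin.init (α := fun _ => Y) (Fin.cons z0 w) := rfl
        have h2 : w ⟨κ, Nat.lt_succ_self κ⟩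
            = (Fin.cons z0 w : Fin (κ+2) → Y) (Fin.last (κ+1)) := (hlastcons z0 w).symm
        rw [h1, h2, Fin.snoc_init_self]
      by_cases hp : 0 < rk (front (Fin.cons z0 w))
      · rw [hQ _ _, if_pos hp, hsnoc, mul_comm, div_mul_cancel₀ _ (ne_of_gt hp)]
      · have hz : rk (front (Fin.cons z0 w)) = 0 := le_antisymm (not_lt.mp hp) (hrk0 _)
        rw [hz, zero_mul]
        have hle : r (Fin.cons z0 w) ≤ rk (front (Fin.cons z0 w)) := by
          rw [hrk]
          conv_lhs => rw [← hsnoc]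
          exact Finset.single_le_sum (f := fun z => r (Fin.snoc (front (Fin.cons z0 w)) z))
            (fun z _ => hr0 _) (Finset.mem_univ _)
        have h0 := hr0 (Fin.cons z0 w)
        rw [hz] at hle
        linarith
    calc rk w = ∑ z, r (Fin.snoc w z) := hrk w
      _ = ∑ z0, r (Fin.cons z0 w) := (hstat w).symm
      _ = ∑ z0, rk (front (Fin.cons z0 w)) *
          Q (front (Fin.cons z0 w)) ((Fin.cons z0 w : Fin (κ + 2) → Y) (Fin.last (κ+1))) :=
        Finset.sum_congr rfl fun z0 _ => (hterm z0).symm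
  -- conclusion
  refine ⟨rk, ⟨⟨hrk0, hrksum⟩, hinv_rk⟩, ?_⟩
  intro μ hμ
  have hμmat : ∀ w, ∑ w'', μ w'' * doobLift Q hk w'' w = μ w := (hequiv μ).mpr hμ.2
  have hrkmat : ∀ w, ∑ w'', rk w'' * doobLift Q hk w'' w = rk w := (hequiv rk).mpr hinv_rk
  exact invariant_unique hDQ hsrcQ hμ.1.1 hμ.1.2 hμmat hrk0 hrksum hrkmat
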